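/- Let f : ℝ × (0, ∞) → ℝ be continuous and satisfy: (a) for every 0 < a < b there is L > 0 with |f(x, r₁) − f(x, r₂)| ≤ L|r₁ − r₂| for all x ∈ ℝ and r₁, r₂ ∈ [a, b]; (b) there exist δ > 0 and c > 0 with f(x, r) ≤ −c/(2r) for all x ∈ ℝ and 0 < r < δ; (c) there exists R₀ > δ with f(x, r) ≥ 1/2 for all x ∈ ℝ and r ≥ R₀; (d) there exists K > 0 with |f(x, r)| ≤ K for all x ∈ ℝ and r ≥ δ. For t ∈ ℝ let 𝓕⁻(t) be the set of differentiable r : [t, T) → (0, ∞) (some T ∈ (t, ∞)) with r′(x) = f(x, r(x)) on [t, T) and r(x) → 0 as x → T⁻, and let 𝓕⁺(t) be the set of differentiable r : [t, ∞) → (0, ∞) with r′ = f(·, r) and r(x) → +∞ as x → +∞. Then there exist constants 0 < m ≤ M and a differentiable R₊ : ℝ → ℝ with m ≤ R₊(x) ≤ M and R₊′(x) = f(x, R₊(x)) for all x ∈ ℝ, such that for every t ∈ ℝ: R₊(t) = sup { r(t) : r ∈ 𝓕⁻(t) }, and R₊(t) ≤ r(t) for every r ∈ 𝓕⁺(t).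 -/

import Mathlib

open Filter

/-- The family `𝓕⁺(t)` of positive solutions of `r' = f(x, r)` on `[t, ∞)`
escaping to `+∞`. -/
def escapingSolutions (f : ℝ → ℝ → ℝ) (t : ℝ) : Set (ℝ → ℝ) :=
  {r | (∀ x ∈ Set.Ici t, 0 < r x) ∧
       (∀ x ∈ Set.Ici t, HasDerivWithinAt r (f x (r x)) (Set.Ici t) x) ∧
       Tendsto r atTop atTop}

/-- The set of values `r(t)` of solutions in the family `𝓕⁻(t)`: positive
solutions of `r' = f(x, r)` on some `[t, T)` which end at `r = 0` as `x → T⁻`. -/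
def vanishingValues (f : ℝ → ℝ → ℝ) (t : ℝ) : Set ℝ :=
  {y | ∃ r : ℝ → ℝ, ∃ T : ℝ, t < T ∧
        (∀ x ∈ Set.Ico t T, 0 < r x) ∧
        (∀ x ∈ Set.Ico t T, HasDerivWithinAt r (f x (r x)) (Set.Ico t T) x) ∧
        Tendsto r (nhdsWithin T (Set.Iio T)) (nhds 0) ∧
        r t = y}

section GenericODE
open Set Real Topology Filter

/-- Convert derivative within `Icc a b` to derivative within `Ici t` for `t ∈ Ico a b`. -/
lemma hasDerivWithinAt_Ici_of_Icc {α D : ℝ → ℝ} {a b t : ℝ}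
    (h : ∀ x ∈ Icc a b, HasDerivWithinAt α (D x) (Icc a b) x) (ht : t ∈ Ico a b) :
    HasDerivWithinAt α (D t) (Ici t) t := by
  refine (h t (Ico_subset_Icc_self ht)).mono_of_mem_nhdsWithin ?_
  rw [mem_nhdsWithin]
  exact ⟨Iio b, isOpen_Iio, ht.2, fun x hx => ⟨ht.1.trans hx.2, hx.1.le⟩⟩

lemma exists_right_gt_of_hasDerivWithinAt_pos {α : ℝ → ℝ} {s : Set ℝ} {d σ : ℝ}
    (h : HasDerivWithinAt α d s σ) (hd : 0 < d) :
    ∃ ε > 0, ∀ y ∈ s, σ < y → y < σ + ε → α σ < α y := by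
  have hs := hasDerivWithinAt_iff_tendsto_slope.mp h
  have hev : ∀ᶠ y in 𝓝[s \ {σ}] σ, 0 < slope α σ y := hs.eventually_const_lt hd
  rw [eventually_nhdsWithin_iff] at hev
  rcases Metric.eventually_nhds_iff.mp hev with ⟨ε, hε, hb⟩
  refine ⟨ε, hε, fun y hy h1 h2 => ?_⟩
  have hmem : y ∈ s \ {σ} := ⟨hy, by simp [h1.ne']⟩
  have hd2 := hb (show dist y σ < ε by
    rw [Real.dist_eq, abs_of_pos (by linarith)]; linarith) hmem
  rw [slope_def_field] at hd2
  have h4 := mul_pos hd2 (sub_pos.mpr h1)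
  rw [div_mul_cancel₀ _ (sub_pos.mpr h1).ne'] at h4
  linarith

lemma exists_right_slope_abs_le {α : ℝ → ℝ} {s : Set ℝ} {d σ C : ℝ}
    (h : HasDerivWithinAt α d s σ) (hd : |d| < C) :
    ∃ ε > 0, ∀ y ∈ s, σ < y → y < σ + ε → |α y - α σ| ≤ C * (y - σ) := by
  have hs := (hasDerivWithinAt_iff_tendsto_slope.mp h).abs
  have hev : ∀ᶠ y in 𝓝[s \ {σ}] σ, |slope α σ y| < C := hs.eventually_lt_const hd
  rw [eventually_nhdsWithin_iff] at hev
  rcases Metric.eventually_nhds_iff.mp hev with ⟨ε, hε, hb⟩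
  refine ⟨ε, hε, fun y hy h1 h2 => ?_⟩
  have hmem : y ∈ s \ {σ} := ⟨hy, by simp [h1.ne']⟩
  have hd2 := hb (show dist y σ < ε by
    rw [Real.dist_eq, abs_of_pos (by linarith)]; linarith) hmem
  rw [slope_def_field, abs_div, abs_of_pos (sub_pos.mpr h1)] at hd2
  have h5 : |α y - α σ| < C * (y - σ) := by
    rw [div_lt_iff₀ (sub_pos.mpr h1)] at hd2; linarith [hd2]
  exact h5.le

/-- Lower barrier: if the vector field is positive whenever the solution touches `d` from above,
and the solution starts at or above `d`, it stays at or above `d`. -/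
lemma barrier_below {α D : ℝ → ℝ} {a b d : ℝ}
    (hder : ∀ x ∈ Icc a b, HasDerivWithinAt α (D x) (Icc a b) x)
    (hpos : ∀ x ∈ Ico a b, α x = d → 0 < D x)
    (ha : d ≤ α a) : ∀ x ∈ Icc a b, d ≤ α x := by
  have hcont : ContinuousOn α (Icc a b) := fun x hx => (hder x hx).continuousWithinAt
  have key : Icc a b ⊆ {x | d ≤ α x} := by
    apply IsClosed.Icc_subset_of_forall_exists_gt
    · have hEq : {x | d ≤ α x} ∩ Icc a b = {x ∈ Icc a b | α x ∈ Ici d} := by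
        ext x; simp [Set.mem_setOf_eq, and_comm]
      rw [hEq]
      exact hcont.preimage_isClosed_of_isClosed isClosed_Icc isClosed_Ici
    · exact ha
    · rintro x ⟨hx1, hx2⟩ y hy
      have hx1' : d ≤ α x := hx1
      have hy' : x < y := hy
      have hxab : x ∈ Icc a b := Ico_subset_Icc_self hx2
      have hstep : ∃ ε > 0, ∀ w ∈ Icc a b, x < w → w < x + ε → d ≤ α w := by
        rcases eq_or_lt_of_le hx1' with heq | hlt
        · obtain ⟨ε, hε, hsl⟩ := exists_right_gt_of_hasDerivWithinAt_pos
            (hder x hxab) (hpos x hx2 heq.symm)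
          exact ⟨ε, hε, fun w hw h1 h2 => heq.trans_le (hsl w hw h1 h2).le⟩
        · have hc : Tendsto α (𝓝[Icc a b] x) (𝓝 (α x)) := hcont x hxab
          have hev : ∀ᶠ w in 𝓝[Icc a b] x, d < α w := hc.eventually_const_lt hlt
          rw [eventually_nhdsWithin_iff] at hev
          rcases Metric.eventually_nhds_iff.mp hev with ⟨ε, hε, hb⟩
          refine ⟨ε, hε, fun w hw h1 h2 => ?_⟩
          exact (hb (show dist w x < ε by
            rw [Real.dist_eq, abs_of_pos (by linarith)]; linarith) hw).le
      obtain ⟨ε, hε, H⟩ := hstep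
      refine ⟨min (min y (x + ε/2)) b, ?_, ?_, ?_⟩
      · have h1 : x < min (min y (x + ε/2)) b :=
          lt_min (lt_min hy' (by linarith)) hx2.2
        have h2 : min (min y (x + ε/2)) b ∈ Icc a b :=
          ⟨hxab.1.trans h1.le, min_le_right _ _⟩
        exact H _ h2 h1 (by
          calc min (min y (x + ε/2)) b ≤ min y (x + ε/2) := min_le_left _ _
          _ ≤ x + ε/2 := min_le_right _ _
          _ < x + ε := by linarith)
      · exact lt_min (lt_min hy' (by linarith)) hx2.2
      · exact (min_le_left _ _).trans (min_le_left _ _)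
  exact fun x hx => key hx

lemma barrier_above {α D : ℝ → ℝ} {a b d : ℝ}
    (hder : ∀ x ∈ Icc a b, HasDerivWithinAt α (D x) (Icc a b) x)
    (hneg : ∀ x ∈ Ico a b, α x = d → D x < 0)
    (ha : α a ≤ d) : ∀ x ∈ Icc a b, α x ≤ d := by
  have := barrier_below (α := fun x => -α x) (D := fun x => -D x) (d := -d)
    (fun x hx => (hder x hx).neg)
    (fun x hx hx2 => by
      have hxd : α x = d := by
        have : -α x = -d := hx2
        linarith
      simpa using (hneg x hx hxd))
    (by simpa using ha)
  intro x hx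
  have h2 := this x hx
  simpa using h2

lemma strictAntiOn_sol {α D : ℝ → ℝ} {a b : ℝ}
    (hder : ∀ x ∈ Icc a b, HasDerivWithinAt α (D x) (Icc a b) x)
    (hneg : ∀ x ∈ Icc a b, D x < 0) : StrictAntiOn α (Icc a b) := by
  apply strictAntiOn_of_deriv_neg (convex_Icc a b)
    (fun x hx => (hder x hx).continuousWithinAt)
  intro x hx
  rw [interior_Icc] at hx
  have h1 : HasDerivAt α (D x) x :=
    (hder x (Ioo_subset_Icc_self hx)).hasDerivAt (Icc_mem_nhds hx.1 hx.2)
  rw [h1.deriv]; exact hneg x (Ioo_subset_Icc_self hx)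

lemma antitoneOn_sol {α D : ℝ → ℝ} {a b : ℝ}
    (hder : ∀ x ∈ Icc a b, HasDerivWithinAt α (D x) (Icc a b) x)
    (hneg : ∀ x ∈ Icc a b, D x ≤ 0) : AntitoneOn α (Icc a b) := by
  apply antitoneOn_of_deriv_nonpos (convex_Icc a b)
    (fun x hx => (hder x hx).continuousWithinAt)
  · intro x hx
    rw [interior_Icc] at hx
    exact ((hder x (Ioo_subset_Icc_self hx)).hasDerivAt
      (Icc_mem_nhds hx.1 hx.2)).differentiableAt.differentiableWithinAt
  · intro x hx
    rw [interior_Icc] at hx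
    have h1 : HasDerivAt α (D x) x :=
      (hder x (Ioo_subset_Icc_self hx)).hasDerivAt (Icc_mem_nhds hx.1 hx.2)
    rw [h1.deriv]
    exact hneg x (Ioo_subset_Icc_self hx)

/-- Glue two solutions on `Icc a m` and `Icc m b`. -/
lemma glue_Icc {v : ℝ → ℝ → ℝ} {α β : ℝ → ℝ} {a m b : ℝ} (ham : a ≤ m) (hmb : m ≤ b)
    (hα : ∀ x ∈ Icc a m, HasDerivWithinAt α (v x (α x)) (Icc a m) x)
    (hβ : ∀ x ∈ Icc m b, HasDerivWithinAt β (v x (β x)) (Icc m b) x)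
    (heq : α m = β m) :
    ∃ γ : ℝ → ℝ, (∀ s, s ≤ m → γ s = α s) ∧ (∀ s, m ≤ s → γ s = β s) ∧
      ∀ x ∈ Icc a b, HasDerivWithinAt γ (v x (γ x)) (Icc a b) x := by
  refine ⟨fun s => if s ≤ m then α s else β s, fun s hs => if_pos hs, ?_, ?_⟩
  · intro s hs
    by_cases h : s ≤ m
    · have hsm : s = m := le_antisymm h hs
      simp [hsm, heq]
    · simp [h]
  · set γ : ℝ → ℝ := fun s => if s ≤ m then α s else β s with hγ
    have h₁ : ∀ s, s ≤ m → γ s = α s := fun s hs => if_pos hs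
    have h₂ : ∀ s, m ≤ s → γ s = β s := by
      intro s hs
      by_cases h : s ≤ m
      · have hsm : s = m := le_antisymm h hs
        simp [γ, hsm, heq]
      · simp [γ, h]
    intro x hx
    rcases lt_trichotomy x m with hxm | hxm | hxm
    · have hd := (hα x ⟨hx.1, hxm.le⟩).mono
        (show Icc a b ∩ Iic m ⊆ Icc a m from fun z hz => ⟨hz.1.1, hz.2⟩)
      have hd2 := hd.congr (fun z hz => h₁ z hz.2) (h₁ x hxm.le)
      rw [← h₁ x hxm.le] at hd2
      exact hd2.mono_of_mem_nhdsWithin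
        (Filter.inter_mem self_mem_nhdsWithin
          (mem_nhdsWithin_of_mem_nhds (Iic_mem_nhds hxm)))
    · subst hxm
      have p1 : HasDerivWithinAt γ (v x (γ x)) (Icc a b ∩ Iic x) x := by
        have hd := (hα x ⟨hx.1, le_refl x⟩).mono
          (show Icc a b ∩ Iic x ⊆ Icc a x from fun z hz => ⟨hz.1.1, hz.2⟩)
        have hd2 := hd.congr (fun z hz => h₁ z hz.2) (h₁ x le_rfl)
        rwa [← h₁ x le_rfl] at hd2
      have p2 : HasDerivWithinAt γ (v x (γ x)) (Icc a b ∩ Ici x) x := by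
        have hd := (hβ x ⟨le_refl x, hx.2⟩).mono
          (show Icc a b ∩ Ici x ⊆ Icc x b from fun z hz => ⟨hz.2, hz.1.2⟩)
        have hd2 := hd.congr (fun z hz => h₂ z hz.2) (h₂ x le_rfl)
        rwa [← h₂ x le_rfl] at hd2
      have hu := p1.union p2
      rwa [← Set.inter_union_distrib_left, Set.Iic_union_Ici, Set.inter_univ] at hu
    · have hd := (hβ x ⟨hxm.le, hx.2⟩).mono
        (show Icc a b ∩ Ici m ⊆ Icc m b from fun z hz => ⟨hz.2, hz.1.2⟩)
      have hd2 := hd.congr (fun z hz => h₂ z hz.2) (h₂ x hxm.le)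
      rw [← h₂ x hxm.le] at hd2
      exact hd2.mono_of_mem_nhdsWithin
        (Filter.inter_mem self_mem_nhdsWithin
          (mem_nhdsWithin_of_mem_nhds (Ici_mem_nhds hxm)))

/-- Glue a solution on `Icc a m` with a solution on `Ico m T`. -/
lemma glue_Ico {v : ℝ → ℝ → ℝ} {α β : ℝ → ℝ} {a m T : ℝ} (ham : a ≤ m) (hmT : m < T)
    (hα : ∀ x ∈ Icc a m, HasDerivWithinAt α (v x (α x)) (Icc a m) x)
    (hβ : ∀ x ∈ Ico m T, HasDerivWithinAt β (v x (β x)) (Ico m T) x)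
    (heq : α m = β m) :
    ∃ γ : ℝ → ℝ, (∀ s, s ≤ m → γ s = α s) ∧ (∀ s, m ≤ s → γ s = β s) ∧
      ∀ x ∈ Ico a T, HasDerivWithinAt γ (v x (γ x)) (Ico a T) x := by
  refine ⟨fun s => if s ≤ m then α s else β s, fun s hs => if_pos hs, ?_, ?_⟩
  · intro s hs
    by_cases h : s ≤ m
    · have hsm : s = m := le_antisymm h hs
      simp [hsm, heq]
    · simp [h]
  · set γ : ℝ → ℝ := fun s => if s ≤ m then α s else β s with hγ
    have h₁ : ∀ s, s ≤ m → γ s = α s := fun s hs => if_pos hs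
    have h₂ : ∀ s, m ≤ s → γ s = β s := by
      intro s hs
      by_cases h : s ≤ m
      · have hsm : s = m := le_antisymm h hs
        simp [γ, hsm, heq]
      · simp [γ, h]
    intro x hx
    rcases lt_trichotomy x m with hxm | hxm | hxm
    · have hd := (hα x ⟨hx.1, hxm.le⟩).mono
        (show Ico a T ∩ Iic m ⊆ Icc a m from fun z hz => ⟨hz.1.1, hz.2⟩)
      have hd2 := hd.congr (fun z hz => h₁ z hz.2) (h₁ x hxm.le)
      rw [← h₁ x hxm.le] at hd2
      exact hd2.mono_of_mem_nhdsWithin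
        (Filter.inter_mem self_mem_nhdsWithin
          (mem_nhdsWithin_of_mem_nhds (Iic_mem_nhds hxm)))
    · subst hxm
      have p1 : HasDerivWithinAt γ (v x (γ x)) (Ico a T ∩ Iic x) x := by
        have hd := (hα x ⟨hx.1, le_refl x⟩).mono
          (show Ico a T ∩ Iic x ⊆ Icc a x from fun z hz => ⟨hz.1.1, hz.2⟩)
        have hd2 := hd.congr (fun z hz => h₁ z hz.2) (h₁ x le_rfl)
        rwa [← h₁ x le_rfl] at hd2
      have p2 : HasDerivWithinAt γ (v x (γ x)) (Ico a T ∩ Ici x) x := by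
        have hd := (hβ x ⟨le_refl x, hx.2⟩).mono
          (show Ico a T ∩ Ici x ⊆ Ico x T from fun z hz => ⟨hz.2, hz.1.2⟩)
        have hd2 := hd.congr (fun z hz => h₂ z hz.2) (h₂ x le_rfl)
        rwa [← h₂ x le_rfl] at hd2
      have hu := p1.union p2
      rwa [← Set.inter_union_distrib_left, Set.Iic_union_Ici, Set.inter_univ] at hu
    · have hd := (hβ x ⟨hxm.le, hx.2⟩).mono
        (show Ico a T ∩ Ici m ⊆ Ico m T from fun z hz => ⟨hz.2, hz.1.2⟩)
      have hd2 := hd.congr (fun z hz => h₂ z hz.2) (h₂ x hxm.le)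
      rw [← h₂ x hxm.le] at hd2
      exact hd2.mono_of_mem_nhdsWithin
        (Filter.inter_mem self_mem_nhdsWithin
          (mem_nhdsWithin_of_mem_nhds (Ici_mem_nhds hxm)))

end GenericODE

/-- The truncated vector field, globally Lipschitz and bounded. -/
noncomputable def gfun (f : ℝ → ℝ → ℝ) (δ R₀ : ℝ) : ℝ → ℝ → ℝ :=
  fun x r => f x (max (δ/4) (min r (R₀+1)))

section Main
open Set Real Topology Filter

variable {f : ℝ → ℝ → ℝ} {δ c R₀ K : ℝ}
variable (hf : ContinuousOn (fun p : ℝ × ℝ => f p.1 p.2) (Set.univ ×ˢ Set.Ioi 0))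
variable (hlip : ∀ a b : ℝ, 0 < a → a < b → ∃ L > 0, ∀ x : ℝ,
      ∀ r₁ ∈ Set.Icc a b, ∀ r₂ ∈ Set.Icc a b, |f x r₁ - f x r₂| ≤ L * |r₁ - r₂|)
variable (hδ : 0 < δ) (hc : 0 < c)
variable (hsmall : ∀ x r : ℝ, 0 < r → r < δ → f x r ≤ -c / (2 * r))
variable (hR₀ : δ < R₀) (hlarge : ∀ x r : ℝ, R₀ ≤ r → (1 : ℝ) / 2 ≤ f x r)
variable (hK : 0 < K) (hbdd : ∀ x r : ℝ, δ ≤ r → |f x r| ≤ K)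

include hf in
lemma fcontAt : ∀ {p : ℝ × ℝ}, 0 < p.2 → ContinuousAt (fun q : ℝ × ℝ => f q.1 q.2) p := by
  intro p hp
  have hmem : (Set.univ ×ˢ Set.Ioi 0 : Set (ℝ × ℝ)) ∈ 𝓝 p :=
    (isOpen_univ.prod isOpen_Ioi).mem_nhds (by simp [hp])
  exact hf.continuousAt hmem

include hf in
lemma fcont_t {r : ℝ} (hr : 0 < r) : Continuous fun x => f x r := by
  rw [continuous_iff_continuousAt]
  intro x
  have h2 : ContinuousAt (fun y : ℝ => ((y, r) : ℝ × ℝ)) x := by fun_prop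
  exact show ContinuousAt ((fun q : ℝ × ℝ => f q.1 q.2) ∘ fun y : ℝ => (y, r)) x from
    ContinuousAt.comp (fcontAt hf (p := (x, r)) hr) h2

include hf hδ hsmall in
lemma fsmall' : ∀ x r : ℝ, 0 < r → r ≤ δ → f x r ≤ -c / (2 * r) := by
  intro x r h0 hr
  rcases lt_or_eq_of_le hr with h | h
  · exact hsmall x r h0 h
  subst h
  have hcf : Tendsto (fun u => f x u) (𝓝[<] r) (𝓝 (f x r)) := by
    have h1 : ContinuousAt (fun u => f x u) r :=
      (fcontAt hf (p := (x, r)) h0).comp (Continuous.continuousAt (by continuity))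
    exact h1.continuousWithinAt
  have hcg : Tendsto (fun u => -c / (2 * u)) (𝓝[<] r) (𝓝 (-c / (2 * r))) := by
    have h1 : ContinuousAt (fun u : ℝ => -c / (2 * u)) r := by
      apply ContinuousAt.div continuousAt_const (by fun_prop)
      positivity
    exact h1.continuousWithinAt
  have hev : ∀ᶠ u in 𝓝[<] r, f x u ≤ -c / (2 * u) := by
    filter_upwards [Ioo_mem_nhdsLT_of_mem (show r ∈ Ioc (r/2) r by constructor <;> linarith)]
      with u hu
    exact hsmall x u (by linarith [hu.1]) hu.2
  exact le_of_tendsto_of_tendsto hcf hcg hev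

include hlip hbdd hδ hK in
lemma fbound : ∀ p q : ℝ, 0 < p → ∃ C > 0, ∀ x : ℝ, ∀ r ∈ Icc p q, |f x r| ≤ C := by
  intro p q hp
  set p' := min p δ with hp'
  set q' := max q (δ + 1) with hq'
  have hp'0 : 0 < p' := lt_min hp hδ
  have hpq' : p' < q' := lt_of_le_of_lt (min_le_right _ _)
    (lt_of_lt_of_le (by linarith) (le_max_right _ _))
  obtain ⟨L, hL, hLf⟩ := hlip p' q' hp'0 hpq'
  refine ⟨K + L * (q' - p'), by nlinarith, fun x r hr => ?_⟩
  have hrm : r ∈ Icc p' q' :=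
    ⟨(min_le_left _ _).trans hr.1, hr.2.trans (le_max_left _ _)⟩
  have hδm : δ ∈ Icc p' q' :=
    ⟨min_le_right _ _, by linarith [le_max_right q (δ+1)]⟩
  have h1 : |f x r - f x δ| ≤ L * |r - δ| := hLf x r hrm δ hδm
  have h2 : |f x δ| ≤ K := hbdd x δ le_rfl
  have h3 : |r - δ| ≤ q' - p' := by
    rw [abs_le]; constructor <;> [linarith [hrm.1, hδm.2]; linarith [hrm.2, hδm.1]]
  calc |f x r| = |(f x r - f x δ) + f x δ| := by ring_nf
    _ ≤ |f x r - f x δ| + |f x δ| := abs_add_le _ _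
    _ ≤ L * |r - δ| + K := add_le_add h1 h2
    _ ≤ L * (q' - p') + K := by nlinarith
    _ = K + L * (q' - p') := by ring

include hlip in
lemma funiq {a b p q : ℝ} {α β : ℝ → ℝ} (hp : 0 < p)
    (hα : ∀ x ∈ Icc a b, HasDerivWithinAt α (f x (α x)) (Icc a b) x)
    (hβ : ∀ x ∈ Icc a b, HasDerivWithinAt β (f x (β x)) (Icc a b) x)
    (hmα : ∀ x ∈ Icc a b, α x ∈ Icc p q)
    (hmβ : ∀ x ∈ Icc a b, β x ∈ Icc p q)
    (heq : α a = β a) : EqOn α β (Icc a b) := by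
  rcases (Icc a b).eq_empty_or_nonempty with h | ⟨z, hz⟩
  · intro t ht
    rw [h] at ht
    exact absurd ht (Set.notMem_empty t)
  have hpq : p ≤ q := le_trans (hmα z hz).1 (hmα z hz).2
  obtain ⟨L, hL, hLf⟩ := hlip p (q + 1) hp (by linarith)
  apply ODE_solution_unique_of_mem_Icc_right
    (v := f) (s := fun _ => Icc p q) (K := Real.toNNReal L)
  · intro t _
    apply LipschitzOnWith.of_dist_le_mul
    intro r₁ h1 r₂ h2
    rw [Real.dist_eq, Real.dist_eq, Real.coe_toNNReal _ hL.le]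
    exact hLf t r₁ ⟨h1.1, by linarith [h1.2]⟩ r₂ ⟨h2.1, by linarith [h2.2]⟩
  · exact fun x hx => (hα x hx).continuousWithinAt
  · exact fun t ht => hasDerivWithinAt_Ici_of_Icc hα ht
  · exact fun t ht => hmα t (Ico_subset_Icc_self ht)
  · exact fun x hx => (hβ x hx).continuousWithinAt
  · exact fun t ht => hasDerivWithinAt_Ici_of_Icc hβ ht
  · exact fun t ht => hmβ t (Ico_subset_Icc_self ht)
  · exact heq

include hf hlip hδ hK hbdd in
lemma flocal : ∀ p q : ℝ, 0 < p → p ≤ q → ∃ ε > 0, ∀ t₀ y : ℝ, y ∈ Icc p q →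
    ∃ α : ℝ → ℝ, α t₀ = y ∧
      (∀ x ∈ Icc t₀ (t₀+ε), HasDerivWithinAt α (f x (α x)) (Icc t₀ (t₀+ε)) x) ∧
      (∀ x ∈ Icc t₀ (t₀+ε), |α x - y| ≤ p/2) := by
  intro p q hp hpq
  obtain ⟨C, hC, hCf⟩ := fbound hlip hδ hK hbdd (p/2) (q + p/2) (by linarith)
  set C' := C + 1 with hC'
  have hC'0 : 0 < C' := by positivity
  set ε := (p/2) / (2*C') with hε
  have hε0 : 0 < ε := by positivity
  have hC'ε : C' * ε = p/4 := by
    rw [hε]; field_simp; ring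
  refine ⟨ε, hε0, fun t₀ y hy => ?_⟩
  obtain ⟨L, hL, hLf⟩ := hlip (p/2) (q + p) (by linarith) (by linarith)
  have hball : Metric.closedBall y (p/2) ⊆ Icc (p/2) (q + p/2) := by
    rw [Real.closedBall_eq_Icc]
    intro z hz
    exact ⟨by linarith [hz.1, hy.1], by linarith [hz.2, hy.2]⟩
  have hpl : IsPicardLindelof f (tmin := t₀) (tmax := t₀+ε) ⟨t₀, le_rfl, by linarith⟩ y
      (Real.toNNReal (p/2)) 0 (Real.toNNReal C) (Real.toNNReal L) := by
    have hp2 : ((Real.toNNReal (p/2) : ℝ)) = p/2 := Real.coe_toNNReal _ (by positivity)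
    constructor
    · intro t _
      apply LipschitzOnWith.of_dist_le_mul
      intro r₁ h1 r₂ h2
      rw [hp2] at h1 h2
      rw [Real.dist_eq, Real.dist_eq, Real.coe_toNNReal _ hL.le]
      exact hLf t r₁ ⟨(hball h1).1, by linarith [(hball h1).2]⟩
        r₂ ⟨(hball h2).1, by linarith [(hball h2).2]⟩
    · intro x hx
      rw [hp2] at hx
      exact (fcont_t hf (lt_of_lt_of_le (by linarith) (hball hx).1)).continuousOn
    · intro t _ x hx
      rw [hp2] at hx
      rw [Real.norm_eq_abs, Real.coe_toNNReal _ hC.le]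
      exact hCf t x (hball hx)
    · simp only [NNReal.coe_zero, sub_zero, hp2, Real.coe_toNNReal _ hC.le]
      rw [add_sub_cancel_left, sub_self, max_eq_left hε0.le]
      nlinarith
  obtain ⟨α, hα0, hαd⟩ := hpl.exists_eq_forall_mem_Icc_hasDerivWithinAt₀
  have hα0 : α t₀ = y := hα0
  have hesc : ∀ x ∈ Icc t₀ (t₀+ε), |α x - y| ≤ C' * (x - t₀) := by
    have hcont : ContinuousOn α (Icc t₀ (t₀+ε)) :=
      fun x hx => (hαd x hx).continuousWithinAt
    have key : Icc t₀ (t₀+ε) ⊆ {x | |α x - y| ≤ C' * (x - t₀)} := by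
      apply IsClosed.Icc_subset_of_forall_exists_gt
      · have hEq : {x | |α x - y| ≤ C' * (x - t₀)} ∩ Icc t₀ (t₀+ε) =
            Icc t₀ (t₀+ε) ∩ (fun x => |α x - y| - C' * (x - t₀)) ⁻¹' Iic 0 := by
          ext x
          simp only [Set.mem_inter_iff, Set.mem_setOf_eq, Set.mem_preimage, Set.mem_Iic]
          constructor
          · rintro ⟨h1, h2⟩; exact ⟨h2, by linarith⟩
          · rintro ⟨h1, h2⟩; exact ⟨by linarith, h1⟩
        rw [hEq]
        refine ContinuousOn.preimage_isClosed_of_isClosed ?_ isClosed_Icc isClosed_Iic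
        exact ((hcont.sub continuousOn_const).abs.sub (by fun_prop))
      · simp [hα0]
      · rintro x ⟨hx1, hx2⟩ w' hw'
        have hx1' : |α x - y| ≤ C' * (x - t₀) := hx1
        have hw'' : x < w' := hw'
        have hxI : x ∈ Icc t₀ (t₀+ε) := Ico_subset_Icc_self hx2
        have hxb : |α x - y| ≤ p/4 := by
          have hle1 : t₀ ≤ x := hx2.1
          have hle2 : x < t₀ + ε := hx2.2
          nlinarith [hx1', hC'ε, hC'0]
        have hαmem : α x ∈ Icc (p/2) (q + p/2) := by
          rw [abs_le] at hxb
          exact ⟨by linarith [hy.1, hxb.1], by linarith [hy.2, hxb.2]⟩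
        have hDb : |f x (α x)| < C + 1/2 := lt_of_le_of_lt (hCf x _ hαmem) (by linarith)
        obtain ⟨ε₂, hε₂, hsl⟩ := exists_right_slope_abs_le (hαd x hxI) hDb
        set z := min w' (min (x + ε₂/2) (t₀+ε)) with hz
        have hxz : x < z := lt_min hw'' (lt_min (by linarith) hx2.2)
        have hzI : z ∈ Icc t₀ (t₀+ε) :=
          ⟨hxI.1.trans hxz.le, (min_le_right _ _).trans (min_le_right _ _)⟩
        have hzε₂ : z < x + ε₂ := by
          calc z ≤ min (x + ε₂/2) (t₀+ε) := min_le_right _ _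
            _ ≤ x + ε₂/2 := min_le_left _ _
            _ < x + ε₂ := by linarith
        have hslz := hsl z hzI hxz hzε₂
        refine ⟨z, ?_, hxz, min_le_left _ _⟩
        show |α z - y| ≤ C' * (z - t₀)
        calc |α z - y| = |(α z - α x) + (α x - y)| := by ring_nf
          _ ≤ |α z - α x| + |α x - y| := abs_add_le _ _
          _ ≤ (C + 1/2) * (z - x) + C' * (x - t₀) := add_le_add hslz hx1'
          _ ≤ C' * (z - x) + C' * (x - t₀) := by nlinarith
          _ = C' * (z - t₀) := by ring
    exact fun x hx => key hx
  refine ⟨α, hα0, hαd, fun x hx => ?_⟩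
  have h1 := hesc x hx
  have hle1 : t₀ ≤ x := hx.1
  have hle2 : x ≤ t₀ + ε := hx.2
  nlinarith [h1, hC'ε, hC'0, hp]

include hδ hR₀ in
lemma clamp_mem (r : ℝ) : max (δ/4) (min r (R₀+1)) ∈ Icc (δ/4) (R₀+1) :=
  ⟨le_max_left _ _, max_le (by linarith) (min_le_right _ _)⟩

include hδ hR₀ in
lemma gfun_eq {x r : ℝ} (h1 : δ/4 ≤ r) (h2 : r ≤ R₀ + 1) : gfun f δ R₀ x r = f x r := by
  rw [gfun, min_eq_left h2, max_eq_right h1]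

include hlip hδ hR₀ in
lemma gfun_lip : ∃ L > 0, ∀ x r₁ r₂ : ℝ,
    |gfun f δ R₀ x r₁ - gfun f δ R₀ x r₂| ≤ L * |r₁ - r₂| := by
  obtain ⟨L, hL, hLf⟩ := hlip (δ/4) (R₀+1) (by linarith) (by linarith)
  refine ⟨L, hL, fun x r₁ r₂ => ?_⟩
  have h1 := hLf x _ (clamp_mem hδ hR₀ r₁) _ (clamp_mem hδ hR₀ r₂)
  refine h1.trans (mul_le_mul_of_nonneg_left ?_ hL.le)
  have h4 := abs_min_sub_min_le_max r₁ (R₀+1) r₂ (R₀+1)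
  rw [sub_self, abs_zero, max_eq_left (abs_nonneg _)] at h4
  calc |max (δ/4) (min r₁ (R₀+1)) - max (δ/4) (min r₂ (R₀+1))|
      = |max (min r₁ (R₀+1)) (δ/4) - max (min r₂ (R₀+1)) (δ/4)| := by
        rw [max_comm (δ/4) (min r₁ (R₀+1)), max_comm (δ/4) (min r₂ (R₀+1))]
    _ ≤ |min r₁ (R₀+1) - min r₂ (R₀+1)| := abs_max_sub_max_le_abs _ _ _
    _ ≤ |r₁ - r₂| := h4

include hlip hδ hK hbdd hR₀ in
lemma gfun_bdd : ∃ C > 0, ∀ x r : ℝ, |gfun f δ R₀ x r| ≤ C := by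
  obtain ⟨C, hC, hCf⟩ := fbound hlip hδ hK hbdd (δ/4) (R₀+1) (by linarith)
  exact ⟨C, hC, fun x r => hCf x _ (clamp_mem hδ hR₀ r)⟩

include hf hδ hc hsmall hR₀ in
lemma gfun_neg {x r : ℝ} (h : r ≤ δ) : gfun f δ R₀ x r < 0 := by
  have h1 : min r (R₀+1) = r := min_eq_left (by linarith)
  rw [gfun, h1]
  have h2 : 0 < max (δ/4) r := lt_of_lt_of_le (by linarith) (le_max_left _ _)
  have h3 : max (δ/4) r ≤ δ := max_le (by linarith) h
  have h4 := fsmall' hf hδ hsmall x _ h2 h3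
  have h5 : -c / (2 * max (δ/4) r) < 0 := div_neg_of_neg_of_pos (by linarith) (by linarith)
  linarith

include hlarge hR₀ hδ in
lemma gfun_pos {x r : ℝ} (h : R₀ ≤ r) : (1:ℝ)/2 ≤ gfun f δ R₀ x r := by
  apply hlarge
  have h1 : R₀ ≤ min r (R₀+1) := le_min h (by linarith)
  exact h1.trans (le_max_right _ _)

include hf hδ hR₀ in
lemma gfun_cont_t (r : ℝ) : Continuous fun x => gfun f δ R₀ x r := by
  have := clamp_mem hδ hR₀ r
  exact fcont_t hf (lt_of_lt_of_le (by linarith) this.1)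

include hf hlip hδ hK hbdd hR₀ in
lemma gexists {C : ℝ} (hC : 0 < C) (hCf : ∀ x r : ℝ, |gfun f δ R₀ x r| ≤ C)
    {L : ℝ} (hL : 0 < L)
    (hLf : ∀ x r₁ r₂ : ℝ, |gfun f δ R₀ x r₁ - gfun f δ R₀ x r₂| ≤ L * |r₁ - r₂|)
    (a b t₀ y : ℝ) (ht₀ : t₀ ∈ Icc a b) :
    ∃ α : ℝ → ℝ, α t₀ = y ∧
      ∀ x ∈ Icc a b, HasDerivWithinAt α (gfun f δ R₀ x (α x)) (Icc a b) x := by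
  have hab : a ≤ b := ht₀.1.trans ht₀.2
  have hpl : IsPicardLindelof (gfun f δ R₀) (tmin := a) (tmax := b) ⟨t₀, ht₀⟩ y
      (Real.toNNReal (C * (b-a) + 1)) 0 (Real.toNNReal C) (Real.toNNReal L) := by
    constructor
    · intro t _
      apply LipschitzOnWith.of_dist_le_mul
      intro r₁ _ r₂ _
      rw [Real.dist_eq, Real.dist_eq, Real.coe_toNNReal _ hL.le]
      exact hLf t r₁ r₂
    · intro x _
      exact (gfun_cont_t hf hδ hR₀ x).continuousOn
    · intro t _ x _
      rw [Real.norm_eq_abs, Real.coe_toNNReal _ hC.le]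
      exact hCf t x
    · simp only [NNReal.coe_zero, sub_zero, Real.coe_toNNReal _ hC.le,
        Real.coe_toNNReal _ (by nlinarith : (0:ℝ) ≤ C * (b-a) + 1)]
      have h1 : max (b - t₀) (t₀ - a) ≤ b - a := by
        apply max_le <;> [linarith [ht₀.1]; linarith [ht₀.2]]
      nlinarith
  exact hpl.exists_eq_forall_mem_Icc_hasDerivWithinAt₀

lemma guniq {L : ℝ} (hL : 0 < L)
    (hLf : ∀ x r₁ r₂ : ℝ, |gfun f δ R₀ x r₁ - gfun f δ R₀ x r₂| ≤ L * |r₁ - r₂|)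
    {a b : ℝ} {α β : ℝ → ℝ}
    (hα : ∀ x ∈ Icc a b, HasDerivWithinAt α (gfun f δ R₀ x (α x)) (Icc a b) x)
    (hβ : ∀ x ∈ Icc a b, HasDerivWithinAt β (gfun f δ R₀ x (β x)) (Icc a b) x)
    (heq : α a = β a) : EqOn α β (Icc a b) := by
  apply ODE_solution_unique (v := gfun f δ R₀) (K := Real.toNNReal L)
  · intro t
    apply LipschitzWith.of_dist_le_mul
    intro r₁ r₂
    rw [Real.dist_eq, Real.dist_eq, Real.coe_toNNReal _ hL.le]
    exact hLf t r₁ r₂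
  · exact fun x hx => (hα x hx).continuousWithinAt
  · exact fun t ht => hasDerivWithinAt_Ici_of_Icc hα ht
  · exact fun x hx => (hβ x hx).continuousWithinAt
  · exact fun t ht => hasDerivWithinAt_Ici_of_Icc hβ ht
  · exact heq

lemma gdist {L : ℝ} (hL : 0 < L)
    (hLf : ∀ x r₁ r₂ : ℝ, |gfun f δ R₀ x r₁ - gfun f δ R₀ x r₂| ≤ L * |r₁ - r₂|)
    {a b : ℝ} {α β : ℝ → ℝ}
    (hα : ∀ x ∈ Icc a b, HasDerivWithinAt α (gfun f δ R₀ x (α x)) (Icc a b) x)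
    (hβ : ∀ x ∈ Icc a b, HasDerivWithinAt β (gfun f δ R₀ x (β x)) (Icc a b) x) :
    ∀ x ∈ Icc a b, |α x - β x| ≤ |α a - β a| * Real.exp (L * (x - a)) := by
  intro x hx
  have h1 := dist_le_of_trajectories_ODE (v := gfun f δ R₀) (K := Real.toNNReal L)
    (f := α) (g := β) (a := a) (b := b) (δ := dist (α a) (β a))
    (fun t => by
      apply LipschitzWith.of_dist_le_mul
      intro r₁ r₂
      rw [Real.dist_eq, Real.dist_eq, Real.coe_toNNReal _ hL.le]
      exact hLf t r₁ r₂)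
    (fun z hz => (hα z hz).continuousWithinAt)
    (fun t ht => hasDerivWithinAt_Ici_of_Icc hα ht)
    (fun z hz => (hβ z hz).continuousWithinAt)
    (fun t ht => hasDerivWithinAt_Ici_of_Icc hβ ht)
    le_rfl x hx
  rw [Real.dist_eq, Real.dist_eq, Real.coe_toNNReal _ hL.le] at h1
  exact h1

/-- Comparison: solutions of the truncated equation preserve order. -/
lemma gcomp {L : ℝ} (hL : 0 < L)
    (hLf : ∀ x r₁ r₂ : ℝ, |gfun f δ R₀ x r₁ - gfun f δ R₀ x r₂| ≤ L * |r₁ - r₂|)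
    {a b : ℝ} {α β : ℝ → ℝ} (hab : a ≤ b)
    (hα : ∀ x ∈ Icc a b, HasDerivWithinAt α (gfun f δ R₀ x (α x)) (Icc a b) x)
    (hβ : ∀ x ∈ Icc a b, HasDerivWithinAt β (gfun f δ R₀ x (β x)) (Icc a b) x)
    (hle : α a ≤ β a) : ∀ x ∈ Icc a b, α x ≤ β x := by
  intro x hx
  by_contra hcon
  push_neg at hcon
  have hax : a < x := by
    rcases eq_or_lt_of_le hx.1 with h | h
    · exfalso; rw [← h] at hcon; linarith
    · exact h
  have hcα : ContinuousOn α (Icc a b) := fun z hz => (hα z hz).continuousWithinAt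
  have hcβ : ContinuousOn β (Icc a b) := fun z hz => (hβ z hz).continuousWithinAt
  set E := {z ∈ Icc a x | α z ≤ β z} with hE
  have hEne : E.Nonempty := ⟨a, ⟨le_rfl, hax.le⟩, hle⟩
  have hEC : IsCompact E := by
    have h1 : E = Icc a x ∩ (fun z => β z - α z) ⁻¹' Ici 0 := by
      ext z
      simp only [hE, Set.mem_inter_iff, Set.mem_setOf_eq, Set.mem_preimage, Set.mem_Ici]
      constructor
      · rintro ⟨h1, h2⟩; exact ⟨h1, by linarith⟩
      · rintro ⟨h1, h2⟩; exact ⟨h1, by linarith⟩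
    rw [h1]
    apply (isCompact_Icc).of_isClosed_subset
    · apply ContinuousOn.preimage_isClosed_of_isClosed _ isClosed_Icc isClosed_Ici
      have hsub : Icc a x ⊆ Icc a b := Icc_subset_Icc le_rfl hx.2
      exact (hcβ.mono hsub).sub (hcα.mono hsub)
    · exact Set.inter_subset_left
  set σ := sSup E with hσ
  have hσE : σ ∈ E := hEC.sSup_mem hEne
  have hσx : σ ≤ x := hσE.1.2
  have hσa : a ≤ σ := hσE.1.1
  have hσne : σ ≠ x := by
    intro h
    rw [h] at hσE
    exact absurd hσE.2 (by linarith)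
  have hσlt : σ < x := lt_of_le_of_ne hσx hσne
  -- to the right of σ, α > β
  have hgt : ∀ z, σ < z → z ≤ x → β z < α z := by
    intro z h1 h2
    by_contra h3
    push_neg at h3
    have : z ∈ E := ⟨⟨hσa.trans h1.le, h2⟩, h3⟩
    exact absurd (le_csSup (hEC.bddAbove) this) (not_le.mpr h1)
  -- α σ = β σ by continuity from the right
  have hσeq : α σ = β σ := by
    refine le_antisymm hσE.2 ?_
    have h1 : Tendsto (fun z => α z - β z) (𝓝[Ioc σ x] σ) (𝓝 (α σ - β σ)) := by
      have hsub : Icc a x ⊆ Icc a b := Icc_subset_Icc le_rfl hx.2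
      have h2 : ContinuousWithinAt (fun z => α z - β z) (Icc a x) σ :=
        ((hcα.mono hsub).sub (hcβ.mono hsub)) σ ⟨hσa, hσx⟩
      exact h2.tendsto.mono_left (nhdsWithin_mono _ (fun z hz => ⟨hσa.trans hz.1.le, hz.2⟩))
    have h3 : ∀ᶠ z in 𝓝[Ioc σ x] σ, 0 ≤ α z - β z := by
      filter_upwards [self_mem_nhdsWithin] with z hz
      linarith [hgt z hz.1 hz.2]
    have h4 : (𝓝[Ioc σ x] σ).NeBot := by
      rw [nhdsWithin_Ioc_eq_nhdsGT hσlt]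
      infer_instance
    have h5 := le_of_tendsto_of_tendsto tendsto_const_nhds h1 h3
    linarith
  -- uniqueness from σ gives a contradiction at x
  have huq := guniq hL hLf (a := σ) (b := x)
    (fun z hz => (hα z ⟨hσa.trans hz.1, hz.2.trans hx.2⟩).mono
      (Icc_subset_Icc hσa (hx.2)))
    (fun z hz => (hβ z ⟨hσa.trans hz.1, hz.2.trans hx.2⟩).mono
      (Icc_subset_Icc hσa (hx.2)))
    hσeq ⟨hσx, le_rfl⟩
  rw [huq] at hcon
  exact absurd hcon (lt_irrefl _)

include hf hlip hδ hc hsmall hK hbdd in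
/-- From any point below `δ`, there is a positive solution reaching `0` in finite time. -/
lemma crash (t₀ y₀ : ℝ) (h0 : 0 < y₀) (hyδ : y₀ < δ) :
    ∃ r : ℝ → ℝ, ∃ T : ℝ, t₀ < T ∧ (∀ x ∈ Ico t₀ T, 0 < r x ∧ r x ≤ y₀) ∧
      (∀ x ∈ Ico t₀ T, HasDerivWithinAt r (f x (r x)) (Ico t₀ T) x) ∧
      Tendsto r (nhdsWithin T (Iio T)) (nhds 0) ∧ r t₀ = y₀ := by
  classical
  set Sol : ℝ → (ℝ → ℝ) → Prop := fun x α => α t₀ = y₀ ∧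
    (∀ s ∈ Icc t₀ x, 0 < α s ∧ α s ≤ y₀) ∧
    (∀ s ∈ Icc t₀ x, HasDerivWithinAt α (f s (α s)) (Icc t₀ x) s) with hSol
  set P : ℝ → Prop := fun x => t₀ ≤ x ∧ ∃ α, Sol x α with hP
  have hfneg : ∀ x r : ℝ, 0 < r → r ≤ y₀ → f x r < 0 := by
    intro x r h1 h2
    have h3 := fsmall' hf hδ hsmall x r h1 (by linarith)
    have h4 : -c / (2 * r) < 0 := div_neg_of_neg_of_pos (by linarith) (by linarith)
    linarith
  have hrestrict : ∀ x x' α, Sol x α → t₀ ≤ x' → x' ≤ x → Sol x' α := by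
    rintro x x' α ⟨ha1, ha2, ha3⟩ h1 h2
    refine ⟨ha1, fun s hs => ha2 s ⟨hs.1, hs.2.trans h2⟩, fun s hs => ?_⟩
    exact (ha3 s ⟨hs.1, hs.2.trans h2⟩).mono (Icc_subset_Icc le_rfl h2)
  have hanti : ∀ x α, t₀ ≤ x → Sol x α → StrictAntiOn α (Icc t₀ x) := by
    rintro x α hx ⟨ha1, ha2, ha3⟩
    exact strictAntiOn_sol ha3 (fun s hs => hfneg s (α s) (ha2 s hs).1 (ha2 s hs).2)
  -- extension step with uniform time for a given lower bound
  have hext : ∀ ℓ, 0 < ℓ → ℓ ≤ y₀ → ∃ ε > 0, ∀ x α, t₀ ≤ x → Sol x α → ℓ ≤ α x →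
      P (x + ε) := by
    intro ℓ hℓ hℓy
    obtain ⟨ε, hε, hloc⟩ := flocal hf hlip hδ hK hbdd ℓ y₀ hℓ hℓy
    refine ⟨ε, hε, fun x α hx hα hℓα => ?_⟩
    obtain ⟨β, hβ0, hβd, hβb⟩ := hloc x (α x) ⟨hℓα, (hα.2.1 x ⟨hx, le_rfl⟩).2⟩
    have hβpos : ∀ s ∈ Icc x (x+ε), 0 < β s := by
      intro s hs
      have h1 := hβb s hs
      rw [abs_le] at h1
      linarith [h1.1, hℓα]
    have hβle : ∀ s ∈ Icc x (x+ε), β s ≤ y₀ := by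
      apply barrier_above hβd
      · intro s hs hs2
        rw [hs2]
        exact hfneg s y₀ h0 le_rfl
      · rw [hβ0]; exact (hα.2.1 x ⟨hx, le_rfl⟩).2
    obtain ⟨γ, hγ1, hγ2, hγd⟩ := glue_Icc (v := f) hx (by linarith : x ≤ x + ε)
      hα.2.2 hβd hβ0.symm
    refine ⟨by linarith, γ, ?_, ?_, hγd⟩
    · rw [hγ1 t₀ hx]; exact hα.1
    · intro s hs
      by_cases h : s ≤ x
      · rw [hγ1 s h]; exact hα.2.1 s ⟨hs.1, h⟩
      · push_neg at h
        rw [hγ2 s h.le]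
        exact ⟨hβpos s ⟨h.le, hs.2⟩, hβle s ⟨h.le, hs.2⟩⟩
  -- a first nontrivial solution
  have hP1 : ∃ x, t₀ < x ∧ P x := by
    obtain ⟨ε, hε, hloc⟩ := flocal hf hlip hδ hK hbdd y₀ y₀ h0 le_rfl
    obtain ⟨β, hβ0, hβd, hβb⟩ := hloc t₀ y₀ ⟨le_rfl, le_rfl⟩
    have hβle : ∀ s ∈ Icc t₀ (t₀+ε), β s ≤ y₀ := by
      apply barrier_above hβd
      · intro s hs hs2
        rw [hs2]
        exact hfneg s y₀ h0 le_rfl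
      · rw [hβ0]
    refine ⟨t₀ + ε, by linarith, by linarith, β, hβ0, fun s hs => ⟨?_, hβle s hs⟩, hβd⟩
    have h1 := hβb s hs
    rw [abs_le] at h1
    linarith [h1.1]
  obtain ⟨x₁, hx₁, hPx₁⟩ := hP1
  -- upper bound on the extent of solutions
  have hbddP : ∀ x, P x → x ≤ t₀ + y₀^2/c := by
    rintro x ⟨hx, α, ha1, ha2, ha3⟩
    have hφ : ∀ s ∈ Icc t₀ x, HasDerivWithinAt (fun z => α z^2 + c*z)
        (2 * α s * f s (α s) + c) (Icc t₀ x) s := by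
      intro s hs
      have h1 : HasDerivWithinAt (fun z => α z^2 + c*z) _ (Icc t₀ x) s :=
        ((ha3 s hs).pow 2).add ((hasDerivWithinAt_id s _).const_mul c)
      convert h1 using 1
      ring
    have hφneg : ∀ s ∈ Icc t₀ x, 2 * α s * f s (α s) + c ≤ 0 := by
      intro s hs
      have h1 := (ha2 s hs).1
      have h2 := fsmall' hf hδ hsmall s (α s) h1 (by linarith [(ha2 s hs).2])
      have h3 : 2 * α s * f s (α s) ≤ 2 * α s * (-c / (2 * α s)) :=
        mul_le_mul_of_nonneg_left h2 (by linarith)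
      have h4 : 2 * α s * (-c / (2 * α s)) = -c := by
        field_simp
      linarith
    have hmono := antitoneOn_sol hφ hφneg ⟨le_rfl, hx⟩ ⟨hx, le_rfl⟩ hx
    simp only [ha1] at hmono
    have h6 := (ha2 x ⟨hx, le_rfl⟩).1
    have h9 : x - t₀ ≤ y₀^2 / c := by
      rw [le_div_iff₀ hc]
      nlinarith
    linarith
  -- the maximal time
  set T := sSup {x | P x} with hT
  have hPne : {x | P x}.Nonempty := ⟨x₁, hPx₁⟩
  have hPbdd : BddAbove {x | P x} := ⟨t₀ + y₀^2/c, fun x hx => hbddP x hx⟩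
  have hTgt : t₀ < T := lt_of_lt_of_le hx₁ (le_csSup hPbdd hPx₁)
  have hdown : ∀ s, t₀ ≤ s → s < T → P s := by
    intro s h1 h2
    obtain ⟨x, hx, hsx⟩ := exists_lt_of_lt_csSup hPne h2
    obtain ⟨hx', α, hα⟩ := hx
    exact ⟨h1, α, hrestrict x s α hα h1 hsx.le⟩
  have hup : ∀ s, s < T → ∃ x, s < x ∧ P x := fun s hs =>
    (exists_lt_of_lt_csSup hPne hs).imp (fun x hx => ⟨hx.2, hx.1⟩)
  -- uniqueness of solutions
  have huniq : ∀ x₂ x₃ α₂ α₃, t₀ ≤ x₂ → x₂ ≤ x₃ → Sol x₂ α₂ → Sol x₃ α₃ →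
      EqOn α₂ α₃ (Icc t₀ x₂) := by
    intro x₂ x₃ α₂ α₃ h1 h2 hα₂ hα₃
    have hα₃' := hrestrict x₃ x₂ α₃ hα₃ h1 h2
    have hcomp : IsCompact (Icc t₀ x₂) := isCompact_Icc
    have hne : (Icc t₀ x₂).Nonempty := ⟨t₀, le_rfl, h1⟩
    obtain ⟨z₂, hz₂, hz₂m⟩ := hcomp.exists_isMinOn hne
      (fun z hz => (hα₂.2.2 z hz).continuousWithinAt)
    obtain ⟨z₃, hz₃, hz₃m⟩ := hcomp.exists_isMinOn hne
      (fun z hz => (hα₃'.2.2 z hz).continuousWithinAt)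
    set p := min (α₂ z₂) (α₃ z₃) with hp
    have hp0 : 0 < p := lt_min (hα₂.2.1 z₂ hz₂).1 (hα₃'.2.1 z₃ hz₃).1
    apply funiq hlip (p := p) (q := y₀) hp0 hα₂.2.2 hα₃'.2.2
    · intro z hz
      exact ⟨le_trans (min_le_left _ _) (hz₂m hz), (hα₂.2.1 z hz).2⟩
    · intro z hz
      exact ⟨le_trans (min_le_right _ _) (hz₃m hz), (hα₃'.2.1 z hz).2⟩
    · rw [hα₂.1, hα₃'.1]
  -- the maximal solution
  set r : ℝ → ℝ := fun s => if h : P s then h.2.choose s else 0 with hr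
  have hr_eq : ∀ x α, t₀ ≤ x → Sol x α → ∀ s ∈ Icc t₀ x, r s = α s := by
    intro x α hx hα s hs
    have hPs : P s := ⟨hs.1, α, hrestrict x s α hα hs.1 hs.2⟩
    have hz := hPs.2.choose_spec
    have h1 : r s = hPs.2.choose s := dif_pos hPs
    rw [h1]
    exact huniq s x _ α hs.1 hs.2 hz hα ⟨hs.1, le_rfl⟩
  have hrt₀ : r t₀ = y₀ := by
    obtain ⟨hx', α, hα⟩ := hPx₁
    rw [hr_eq x₁ α hx' hα t₀ ⟨le_rfl, hx'⟩]
    exact hα.1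
  have hrpos : ∀ x ∈ Ico t₀ T, 0 < r x ∧ r x ≤ y₀ := by
    intro x hx
    obtain ⟨hx', α, hα⟩ := hdown x hx.1 hx.2
    rw [hr_eq x α hx' hα x ⟨hx', le_rfl⟩]
    exact hα.2.1 x ⟨hx', le_rfl⟩
  have hrderiv : ∀ x ∈ Ico t₀ T, HasDerivWithinAt r (f x (r x)) (Ico t₀ T) x := by
    intro x hx
    obtain ⟨z, hxz, hPz⟩ := hup x hx.2
    obtain ⟨hz', α, hα⟩ := hPz
    have hxz' : x ∈ Icc t₀ z := ⟨hx.1, hxz.le⟩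
    have hd := (hα.2.2 x hxz').mono
      (show Ico t₀ T ∩ Iic z ⊆ Icc t₀ z from fun w hw => ⟨hw.1.1, hw.2⟩)
    have hd2 := hd.congr
      (fun w hw => hr_eq z α hz' hα w ⟨hw.1.1, hw.2⟩)
      (hr_eq z α hz' hα x hxz')
    rw [← hr_eq z α hz' hα x hxz'] at hd2
    exact hd2.mono_of_mem_nhdsWithin
      (Filter.inter_mem self_mem_nhdsWithin
        (mem_nhdsWithin_of_mem_nhds (Iic_mem_nhds hxz)))
  have hrmono : AntitoneOn r (Ioo t₀ T) := by
    intro s hs s' hs' hss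
    obtain ⟨z, hz, hPz⟩ := hup s' hs'.2
    obtain ⟨hz', α, hα⟩ := hPz
    have h1 : s ∈ Icc t₀ z := ⟨hs.1.le, by linarith [hs'.1]⟩
    have h2 : s' ∈ Icc t₀ z := ⟨hs'.1.le, hz.le⟩
    rw [hr_eq z α hz' hα s h1, hr_eq z α hz' hα s' h2]
    rcases eq_or_lt_of_le hss with h | h
    · rw [h]
    · exact (hanti z α hz' hα h1 h2 h).le
  -- the limit at T
  have hTne : (Ioo t₀ T).Nonempty := nonempty_Ioo.mpr hTgt
  have hbb : BddBelow (r '' Ioo t₀ T) :=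
    ⟨0, fun w ⟨z, hz, hw⟩ => hw ▸ (hrpos z ⟨hz.1.le, hz.2⟩).1.le⟩
  have htend : Tendsto r (nhdsWithin T (Iio T)) (nhds (sInf (r '' Ioo t₀ T))) :=
    hrmono.tendsto_nhdsWithin_Ioo_left hTne hbb
  set ℓ := sInf (r '' Ioo t₀ T) with hℓ
  have hℓ0 : 0 ≤ ℓ := le_csInf (hTne.image r)
    (fun w ⟨z, hz, hw⟩ => hw ▸ (hrpos z ⟨hz.1.le, hz.2⟩).1.le)
  have hℓ_eq : ℓ = 0 := by
    by_contra hne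
    have hℓpos : 0 < ℓ := lt_of_le_of_ne hℓ0 (Ne.symm hne)
    have hmid : (t₀ + T)/2 ∈ Ioo t₀ T := ⟨by linarith, by linarith⟩
    have hℓy : ℓ ≤ y₀ := by
      have h1 : ℓ ≤ r ((t₀ + T)/2) := csInf_le hbb ⟨_, hmid, rfl⟩
      linarith [(hrpos _ ⟨hmid.1.le, hmid.2⟩).2]
    obtain ⟨ε, hε, hstep⟩ := hext ℓ hℓpos hℓy
    set s₁ := max t₀ (T - ε/2) with hs₁
    have hs₁T : s₁ < T := max_lt hTgt (by linarith)
    have hs₁t₀ : t₀ ≤ s₁ := le_max_left _ _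
    obtain ⟨hs₁', α, hα⟩ := hdown s₁ hs₁t₀ hs₁T
    have hℓr : ℓ ≤ α s₁ := by
      rw [← hr_eq s₁ α hs₁' hα s₁ ⟨hs₁', le_rfl⟩]
      rcases eq_or_lt_of_le hs₁t₀ with h | h
      · rw [← h, hrt₀]; exact hℓy
      · exact csInf_le hbb ⟨s₁, ⟨h, hs₁T⟩, rfl⟩
    have hP2 := hstep s₁ α hs₁' hα hℓr
    have h3 : s₁ + ε ≤ T := le_csSup hPbdd hP2
    have h4 : T - ε/2 ≤ s₁ := le_max_right _ _
    linarith
  rw [hℓ_eq] at htend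
  exact ⟨r, T, hTgt, hrpos, hrderiv, htend, hrt₀⟩

include hδ hR₀ hlarge in
lemma vanish_lt {r : ℝ → ℝ} {t T : ℝ} (hT : t < T)
    (hpos : ∀ x ∈ Ico t T, 0 < r x)
    (hder : ∀ x ∈ Ico t T, HasDerivWithinAt r (f x (r x)) (Ico t T) x)
    (htend : Tendsto r (nhdsWithin T (Iio T)) (nhds 0)) :
    ∀ x ∈ Ico t T, r x < R₀ := by
  intro x₀ hx₀
  by_contra hcon
  push_neg at hcon
  have hev : ∀ᶠ z in 𝓝[<] T, r z < R₀ :=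
    htend.eventually_lt_const (by linarith : (0:ℝ) < R₀)
  have hmem : Ioo x₀ T ∈ 𝓝[<] T := Ioo_mem_nhdsLT_of_mem ⟨hx₀.2, le_rfl⟩
  obtain ⟨x₁, hx₁v, hx₁m⟩ := (hev.and (eventually_of_mem hmem (fun z hz => hz))).exists
  have hsub : Icc x₀ x₁ ⊆ Ico t T := fun z hz => ⟨hx₀.1.trans hz.1, lt_of_le_of_lt hz.2 hx₁m.2⟩
  have hbar := barrier_below (a := x₀) (b := x₁) (d := R₀)
    (α := r) (D := fun z => f z (r z))
    (fun z hz => (hder z (hsub hz)).mono hsub)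
    (fun z hz hz2 => by
      have := hlarge z (r z) (le_of_eq hz2.symm)
      linarith)
    hcon
  have := hbar x₁ ⟨hx₁m.1.le, le_rfl⟩
  linarith

include hf hlip hδ hc hsmall hK hbdd in
lemma mem_vanishing {t y : ℝ} (h0 : 0 < y) (hy : y < δ) : y ∈ vanishingValues f t := by
  obtain ⟨r, T, h1, h2, h3, h4, h5⟩ := crash hf hlip hδ hc hsmall hK hbdd t y h0 hy
  exact ⟨r, T, h1, fun x hx => (h2 x hx).1, h3, h4, h5⟩

include hf hlip hδ hc hsmall hK hbdd in
lemma vanishing_nonempty (t : ℝ) : (vanishingValues f t).Nonempty :=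
  ⟨δ/2, mem_vanishing hf hlip hδ hc hsmall hK hbdd (by linarith) (by linarith)⟩

include hδ hR₀ hlarge in
lemma vanishing_ub {t y : ℝ} (hy : y ∈ vanishingValues f t) : 0 < y ∧ y < R₀ := by
  obtain ⟨r, T, h1, h2, h3, h4, h5⟩ := hy
  constructor
  · rw [← h5]; exact h2 t ⟨le_rfl, h1⟩
  · rw [← h5]
    exact vanish_lt hδ hR₀ hlarge h1 h2 h3 h4 t ⟨le_rfl, h1⟩

include hδ hR₀ hlarge in
lemma vanishing_bdd (t : ℝ) : BddAbove (vanishingValues f t) :=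
  ⟨R₀, fun y hy => (vanishing_ub hδ hR₀ hlarge hy).2.le⟩

include hf hlip hδ hc hsmall hR₀ hlarge hK hbdd in
lemma Rlb (t : ℝ) : δ ≤ sSup (vanishingValues f t) := by
  by_contra hcon
  push_neg at hcon
  have h1 : δ/2 ≤ sSup (vanishingValues f t) :=
    le_csSup (vanishing_bdd hδ hR₀ hlarge t)
      (mem_vanishing hf hlip hδ hc hsmall hK hbdd (by linarith) (by linarith))
  set w := (sSup (vanishingValues f t) + δ)/2 with hw
  have h2 : w ∈ vanishingValues f t :=
    mem_vanishing hf hlip hδ hc hsmall hK hbdd (by linarith) (by linarith)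
  have h3 := le_csSup (vanishing_bdd hδ hR₀ hlarge t) h2
  rw [hw] at h3
  linarith

include hf hlip hδ hc hsmall hR₀ hlarge hK hbdd in
lemma Rub (t : ℝ) : sSup (vanishingValues f t) ≤ R₀ :=
  csSup_le (vanishing_nonempty hf hlip hδ hc hsmall hK hbdd t)
    (fun y hy => (vanishing_ub hδ hR₀ hlarge hy).2.le)

include hf hlip hδ hc hsmall hR₀ hlarge hK hbdd in
/-- Backward extension: the solution of the truncated equation ending at `(u, y)` stays in
the band `[min y δ, R₀)`, hence solves the original equation. -/
lemma backsol {L C : ℝ} (hL : 0 < L)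
    (hLf : ∀ x r₁ r₂ : ℝ, |gfun f δ R₀ x r₁ - gfun f δ R₀ x r₂| ≤ L * |r₁ - r₂|)
    (hC : 0 < C) (hCf : ∀ x r : ℝ, |gfun f δ R₀ x r| ≤ C)
    {s u y : ℝ} (hsu : s ≤ u) (h1 : δ/2 < y) (h2 : y < R₀) :
    ∃ β : ℝ → ℝ, β u = y ∧ (∀ x ∈ Icc s u, min y δ ≤ β x ∧ β x < R₀) ∧
      (∀ x ∈ Icc s u, HasDerivWithinAt β (f x (β x)) (Icc s u) x) ∧
      (∀ x ∈ Icc s u, HasDerivWithinAt β (gfun f δ R₀ x (β x)) (Icc s u) x) := by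
  obtain ⟨β, hβu, hβd⟩ := gexists hf hlip hδ hR₀ hK hbdd hC hCf hL hLf s u u y ⟨hsu, le_rfl⟩
  have hlb : ∀ x ∈ Icc s u, min y δ ≤ β x := by
    by_contra hcon
    push_neg at hcon
    obtain ⟨x₀, hx₀, hx₀lt⟩ := hcon
    have hsub : Icc x₀ u ⊆ Icc s u := Icc_subset_Icc hx₀.1 le_rfl
    have hb1 : ∀ z ∈ Icc x₀ u, β z ≤ min y δ := by
      apply barrier_above (D := fun z => gfun f δ R₀ z (β z))
        (fun z hz => (hβd z (hsub hz)).mono hsub)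
      · intro z hz hz2
        exact gfun_neg hf hδ hc hsmall hR₀ (by rw [hz2]; exact min_le_right _ _)
      · exact hx₀lt.le
    have hx₀u : x₀ < u := by
      rcases eq_or_lt_of_le hx₀.2 with h | h
      · exfalso
        rw [h, hβu] at hx₀lt
        have := min_le_left y δ
        linarith
      · exact h
    have hb2 : StrictAntiOn β (Icc x₀ u) := by
      apply strictAntiOn_sol (D := fun z => gfun f δ R₀ z (β z))
        (fun z hz => (hβd z (hsub hz)).mono hsub)
      intro z hz
      exact gfun_neg hf hδ hc hsmall hR₀ ((hb1 z hz).trans (min_le_right _ _))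
    have h3 := hb2 ⟨le_rfl, hx₀u.le⟩ ⟨hx₀u.le, le_rfl⟩ hx₀u
    rw [hβu] at h3
    have := min_le_left y δ
    linarith
  have hub : ∀ x ∈ Icc s u, β x < R₀ := by
    by_contra hcon
    push_neg at hcon
    obtain ⟨x₀, hx₀, hx₀ge⟩ := hcon
    have hsub : Icc x₀ u ⊆ Icc s u := Icc_subset_Icc hx₀.1 le_rfl
    have hb1 : ∀ z ∈ Icc x₀ u, R₀ ≤ β z := by
      apply barrier_below (D := fun z => gfun f δ R₀ z (β z))
        (fun z hz => (hβd z (hsub hz)).mono hsub)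
      · intro z hz hz2
        have := gfun_pos hδ hR₀ hlarge (x := z) (le_of_eq hz2.symm)
        linarith
      · exact hx₀ge
    have h3 := hb1 u ⟨hx₀.2, le_rfl⟩
    rw [hβu] at h3
    linarith
  have hmin : δ/2 < min y δ := lt_min h1 (by linarith)
  refine ⟨β, hβu, fun x hx => ⟨hlb x hx, hub x hx⟩, fun x hx => ?_, hβd⟩
  have hd := hβd x hx
  rwa [gfun_eq hδ hR₀ (by linarith [hlb x hx]) (by linarith [hub x hx])] at hd

include hf hlip hδ hc hsmall hR₀ hlarge hK hbdd in
/-- Any solution of the truncated equation starting on the graph of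
`t ↦ sSup (vanishingValues f t)` dominates all vanishing values, and stays above `δ`. -/
lemma star_ge {L C : ℝ} (hL : 0 < L)
    (hLf : ∀ x r₁ r₂ : ℝ, |gfun f δ R₀ x r₁ - gfun f δ R₀ x r₂| ≤ L * |r₁ - r₂|)
    (hC : 0 < C) (hCf : ∀ x r : ℝ, |gfun f δ R₀ x r| ≤ C)
    {s u : ℝ} (hsu : s ≤ u) {ψ : ℝ → ℝ}
    (hψ : ∀ x ∈ Icc s u, HasDerivWithinAt ψ (gfun f δ R₀ x (ψ x)) (Icc s u) x)
    (hψs : ψ s = sSup (vanishingValues f s)) :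
    δ ≤ ψ u ∧ sSup (vanishingValues f u) ≤ ψ u := by
  -- main tool: a value reachable backward is dominated by ψ
  have main : ∀ y : ℝ, δ/2 < y → y < R₀ →
      (∀ β : ℝ → ℝ, β u = y → (∀ x ∈ Icc s u, min y δ ≤ β x ∧ β x < R₀) →
        (∀ x ∈ Icc s u, HasDerivWithinAt β (f x (β x)) (Icc s u) x) → β s ∈ vanishingValues f s) →
      y ≤ ψ u := by
    intro y h1 h2 hvan
    obtain ⟨β, hβu, hβb, hβf, hβg⟩ :=
      backsol hf hlip hδ hc hsmall hR₀ hlarge hK hbdd hL hLf hC hCf hsu h1 h2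
    have h5 : β s ≤ ψ s := by
      rw [hψs]
      exact le_csSup (vanishing_bdd hδ hR₀ hlarge s) (hvan β hβu hβb hβf)
    have h6 := gcomp hL hLf hsu hβg hψ h5 u ⟨hsu, le_rfl⟩
    rwa [hβu] at h6
  have hA : δ ≤ ψ u := by
    by_contra hcon
    push_neg at hcon
    set y := (max (ψ u) (δ/2) + δ)/2 with hy
    have hy1 : δ/2 < y := by
      have := le_max_right (ψ u) (δ/2)
      rw [hy]; nlinarith [le_max_right (ψ u) (δ/2)]
    have hy2 : y < δ := by
      have h1 : max (ψ u) (δ/2) < δ := max_lt hcon (by linarith)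
      rw [hy]; linarith
    have hy3 : ψ u < y := by
      have := le_max_left (ψ u) (δ/2)
      rw [hy]; nlinarith [le_max_left (ψ u) (δ/2)]
    have h4 := main y hy1 (by linarith) ?_
    · linarith
    intro β hβu hβb hβf
    -- glue with a crash solution from (u, y)
    obtain ⟨rc, T, hTu, hrcb, hrcd, hrct, hrc0⟩ :=
      crash hf hlip hδ hc hsmall hK hbdd u y (by linarith) hy2
    obtain ⟨γ, hγ1, hγ2, hγd⟩ := glue_Ico (v := f) hsu hTu hβf hrcd (hβu.trans hrc0.symm)
    refine ⟨γ, T, lt_of_le_of_lt hsu hTu, ?_, hγd, ?_, hγ1 s hsu⟩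
    · intro z hz
      by_cases h : z ≤ u
      · rw [hγ1 z h]
        have := (hβb z ⟨hz.1, h⟩).1
        have h7 : δ/2 < min y δ := lt_min hy1 (by linarith)
        linarith
      · push_neg at h
        rw [hγ2 z h.le]
        exact (hrcb z ⟨h.le, hz.2⟩).1
    · apply hrct.congr'
      filter_upwards [Ioo_mem_nhdsLT_of_mem (⟨hTu, le_rfl⟩ : T ∈ Ioc u T)] with z hz
      exact (hγ2 z hz.1.le).symm
  refine ⟨hA, csSup_le (vanishing_nonempty hf hlip hδ hc hsmall hK hbdd u) ?_⟩
  intro y hymem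
  by_cases hyδ : y ≤ δ
  · linarith
  push_neg at hyδ
  obtain ⟨hy0, hyR₀⟩ := vanishing_ub hδ hR₀ hlarge hymem
  obtain ⟨ry, Ty, hTy, hryb, hryd, hryt, hry0⟩ := hymem
  apply main y (by linarith) hyR₀
  intro β hβu hβb hβf
  obtain ⟨γ, hγ1, hγ2, hγd⟩ := glue_Ico (v := f) hsu hTy hβf hryd (hβu.trans hry0.symm)
  refine ⟨γ, Ty, lt_of_le_of_lt hsu hTy, ?_, hγd, ?_, hγ1 s hsu⟩
  · intro z hz
    by_cases h : z ≤ u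
    · rw [hγ1 z h]
      have := (hβb z ⟨hz.1, h⟩).1
      have h7 : 0 < min y δ := lt_min hy0 hδ
      linarith
    · push_neg at h
      rw [hγ2 z h.le]
      exact hryb z ⟨h.le, hz.2⟩
  · apply hryt.congr'
    filter_upwards [Ioo_mem_nhdsLT_of_mem (⟨hTy, le_rfl⟩ : Ty ∈ Ioc u Ty)] with z hz
    exact (hγ2 z hz.1.le).symm

include hf hlip hδ hc hsmall hR₀ hlarge hK hbdd in
lemma star_le {L C : ℝ} (hL : 0 < L)
    (hLf : ∀ x r₁ r₂ : ℝ, |gfun f δ R₀ x r₁ - gfun f δ R₀ x r₂| ≤ L * |r₁ - r₂|)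
    (hC : 0 < C) (hCf : ∀ x r : ℝ, |gfun f δ R₀ x r| ≤ C)
    {s u : ℝ} (hsu : s ≤ u) {ψ : ℝ → ℝ}
    (hψ : ∀ x ∈ Icc s u, HasDerivWithinAt ψ (gfun f δ R₀ x (ψ x)) (Icc s u) x)
    (hψs : ψ s = sSup (vanishingValues f s)) :
    ψ u ≤ sSup (vanishingValues f u) := by
  have key : ∀ ε, 0 < ε → ε ≤ δ/2 → ψ u - ε ≤ sSup (vanishingValues f u) := by
    intro ε hε hεδ
    by_cases hcase : ψ u ≤ δ
    · have := Rlb hf hlip hδ hc hsmall hR₀ hlarge hK hbdd u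
      linarith
    push_neg at hcase
    set ε' := ε * Real.exp (-(L * (u - s))) with hε'def
    have hε'pos : 0 < ε' := by positivity
    have hexp1 : Real.exp (-(L * (u-s))) ≤ 1 := Real.exp_le_one_iff.mpr (by nlinarith)
    have hε'ε : ε' ≤ ε := by nlinarith [Real.exp_pos (-(L*(u-s)))]
    have hexp : ε' * Real.exp (L * (u - s)) = ε := by
      rw [hε'def, mul_assoc, ← Real.exp_add]
      simp
    have hRs := Rlb hf hlip hδ hc hsmall hR₀ hlarge hK hbdd s
    obtain ⟨w, hwmem, hwgt⟩ := exists_lt_of_lt_csSup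
      (vanishing_nonempty hf hlip hδ hc hsmall hK hbdd s)
      (show sSup (vanishingValues f s) - ε' < sSup (vanishingValues f s) by linarith)
    have hwle : w ≤ sSup (vanishingValues f s) :=
      le_csSup (vanishing_bdd hδ hR₀ hlarge s) hwmem
    have hwδ2 : δ/2 < w := by linarith
    obtain ⟨rw₀, Tw, hTw, hrwb, hrwd, hrwt, hrw0⟩ := hwmem
    have hwR₀all := vanish_lt hδ hR₀ hlarge hTw hrwb hrwd hrwt
    have hψsw : |rw₀ s - ψ s| ≤ ε' := by
      rw [hrw0, hψs, abs_le]
      constructor <;> linarith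
    by_cases hD : ∃ e, e ∈ Ico s Tw ∧ e ≤ u ∧ rw₀ e ≤ δ/2
    · exfalso
      obtain ⟨e, heI, heu, heδ⟩ := hD
      set D' := {z | (z ∈ Ico s Tw ∧ z ≤ u ∧ rw₀ z ≤ δ/2) ∧ z ≤ e} with hD'
      have hD'ne : D'.Nonempty := ⟨e, ⟨heI, heu, heδ⟩, le_rfl⟩
      have hD'bdd : BddBelow D' := ⟨s, fun z hz => hz.1.1.1⟩
      set x₁ := sInf D' with hx₁def
      have hx₁e : x₁ ≤ e := csInf_le hD'bdd ⟨⟨heI, heu, heδ⟩, le_rfl⟩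
      have hx₁s : s ≤ x₁ := le_csInf hD'ne (fun z hz => hz.1.1.1)
      have hx₁u : x₁ ≤ u := hx₁e.trans heu
      have hx₁Tw : x₁ < Tw := lt_of_le_of_lt hx₁e heI.2
      have hsubse : Icc s e ⊆ Ico s Tw := fun z hz => ⟨hz.1, lt_of_le_of_lt hz.2 heI.2⟩
      have hcont_e : ContinuousOn rw₀ (Icc s e) := fun z hz =>
        ((hrwd z (hsubse hz)).mono hsubse).continuousWithinAt
      have hx₁δ : rw₀ x₁ ≤ δ/2 := by
        have hclosed : IsClosed (Icc s e ∩ rw₀ ⁻¹' Iic (δ/2)) :=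
          hcont_e.preimage_isClosed_of_isClosed isClosed_Icc isClosed_Iic
        have hsub2 : D' ⊆ Icc s e ∩ rw₀ ⁻¹' Iic (δ/2) :=
          fun z hz => ⟨⟨hz.1.1.1, hz.2⟩, hz.1.2.2⟩
        have hcl := csInf_mem_closure hD'ne hD'bdd
        exact (hclosed.closure_subset ((closure_mono hsub2) hcl)).2
      have hfirst : ∀ z, s ≤ z → z < x₁ → δ/2 < rw₀ z := by
        intro z hz1 hz2
        by_contra h3
        push_neg at h3
        have hzD : z ∈ D' :=
          ⟨⟨⟨hz1, lt_of_lt_of_le hz2 hx₁Tw.le⟩, by linarith, h3⟩, by linarith⟩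
        linarith [csInf_le hD'bdd hzD]
      have hsx₁ : s < x₁ := by
        rcases eq_or_lt_of_le hx₁s with h | h
        · exfalso
          rw [← h, hrw0] at hx₁δ
          linarith
        · exact h
      have hge : δ/2 ≤ rw₀ x₁ := by
        have hcont : ContinuousWithinAt rw₀ (Icc s x₁) x₁ :=
          (hcont_e.mono (Icc_subset_Icc le_rfl hx₁e)) x₁ ⟨hx₁s, le_rfl⟩
        have h1 : Tendsto rw₀ (𝓝[Ioo s x₁] x₁) (𝓝 (rw₀ x₁)) :=
          hcont.tendsto.mono_left (nhdsWithin_mono _ (fun z hz => ⟨hz.1.le, hz.2.le⟩))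
        have h2 : ∀ᶠ z in 𝓝[Ioo s x₁] x₁, δ/2 ≤ rw₀ z :=
          eventually_of_mem self_mem_nhdsWithin (fun z hz => (hfirst z hz.1.le hz.2).le)
        have h3 : (𝓝[Ioo s x₁] x₁).NeBot := by
          rw [nhdsWithin_Ioo_eq_nhdsLT hsx₁]
          infer_instance
        exact ge_of_tendsto h1 h2
      have hband : ∀ z ∈ Icc s x₁, δ/2 ≤ rw₀ z ∧ rw₀ z < R₀ := by
        intro z hz
        refine ⟨?_, hwR₀all z ⟨hz.1, lt_of_le_of_lt hz.2 hx₁Tw⟩⟩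
        rcases eq_or_lt_of_le hz.2 with h | h
        · rw [h]; exact hge
        · exact (hfirst z hz.1 h).le
      have hrwg : ∀ z ∈ Icc s x₁, HasDerivWithinAt rw₀ (gfun f δ R₀ z (rw₀ z)) (Icc s x₁) z := by
        intro z hz
        have hsub : Icc s x₁ ⊆ Ico s Tw := fun w hw => ⟨hw.1, lt_of_le_of_lt hw.2 hx₁Tw⟩
        have hd := (hrwd z (hsub hz)).mono hsub
        rw [gfun_eq hδ hR₀ (by linarith [(hband z hz).1]) (by linarith [(hband z hz).2])]
        exact hd
      have hψ' : ∀ z ∈ Icc s x₁, HasDerivWithinAt ψ (gfun f δ R₀ z (ψ z)) (Icc s x₁) z :=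
        fun z hz => (hψ z ⟨hz.1, hz.2.trans hx₁u⟩).mono (Icc_subset_Icc le_rfl hx₁u)
      have hgr := gdist hL hLf hrwg hψ' x₁ ⟨hx₁s, le_rfl⟩
      have hexp2 : Real.exp (L * (x₁ - s)) ≤ Real.exp (L * (u - s)) :=
        Real.exp_le_exp.mpr (by nlinarith)
      have h8 : |rw₀ x₁ - ψ x₁| ≤ ε := by
        calc |rw₀ x₁ - ψ x₁| ≤ |rw₀ s - ψ s| * Real.exp (L*(x₁-s)) := hgr
          _ ≤ ε' * Real.exp (L*(x₁-s)) :=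
            mul_le_mul_of_nonneg_right hψsw (Real.exp_pos _).le
          _ ≤ ε' * Real.exp (L*(u-s)) :=
            mul_le_mul_of_nonneg_left hexp2 hε'pos.le
          _ = ε := hexp
      have h9 : ψ x₁ ≤ δ := by
        rw [abs_le] at h8
        linarith [h8.1]
      have h10 : ψ u ≤ δ := by
        rcases eq_or_lt_of_le hx₁u with h | h
        · rw [← h]; exact h9
        · have hsub : Icc x₁ u ⊆ Icc s u := Icc_subset_Icc hx₁s le_rfl
          have hb := barrier_above (a := x₁) (b := u) (d := δ) (α := ψ)
            (D := fun z => gfun f δ R₀ z (ψ z))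
            (fun z hz => (hψ z (hsub hz)).mono hsub)
            (fun z hz hz2 => gfun_neg hf hδ hc hsmall hR₀ (le_of_eq hz2))
            h9
          exact hb u ⟨hx₁u, le_rfl⟩
      linarith
    · -- no dip below δ/2 before u : the solution survives beyond u
      have hTwu : u < Tw := by
        by_contra hcon2
        push_neg at hcon2
        have hev : ∀ᶠ z in 𝓝[<] Tw, rw₀ z < δ/2 :=
          hrwt.eventually_lt_const (by linarith)
        have hmem2 : Ioo (max s (Tw - 1)) Tw ∈ 𝓝[<] Tw :=
          Ioo_mem_nhdsLT_of_mem ⟨max_lt hTw (by linarith), le_rfl⟩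
        obtain ⟨z, hz1, hz2⟩ := (hev.and (eventually_of_mem hmem2 (fun z hz => hz))).exists
        exact hD ⟨z, ⟨(le_max_left s _).trans hz2.1.le, hz2.2⟩, by linarith [hz2.2], hz1.le⟩
      have hband : ∀ x ∈ Icc s u, δ/2 < rw₀ x ∧ rw₀ x < R₀ := by
        intro x hx
        have hxI : x ∈ Ico s Tw := ⟨hx.1, lt_of_le_of_lt hx.2 hTwu⟩
        refine ⟨?_, hwR₀all x hxI⟩
        by_contra h3
        push_neg at h3
        exact hD ⟨x, hxI, hx.2, h3⟩
      have hrwg : ∀ x ∈ Icc s u, HasDerivWithinAt rw₀ (gfun f δ R₀ x (rw₀ x)) (Icc s u) x := by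
        intro x hx
        have hsub : Icc s u ⊆ Ico s Tw := fun z hz => ⟨hz.1, lt_of_le_of_lt hz.2 hTwu⟩
        have hd := (hrwd x (hsub hx)).mono hsub
        rw [gfun_eq hδ hR₀ (by linarith [(hband x hx).1]) (by linarith [(hband x hx).2])]
        exact hd
      have hgr := gdist hL hLf hrwg hψ u ⟨hsu, le_rfl⟩
      have h8 : |rw₀ u - ψ u| ≤ ε := by
        calc |rw₀ u - ψ u| ≤ |rw₀ s - ψ s| * Real.exp (L*(u-s)) := hgr
          _ ≤ ε' * Real.exp (L*(u-s)) :=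
            mul_le_mul_of_nonneg_right hψsw (Real.exp_pos _).le
          _ = ε := hexp
      have h9 : ψ u - ε ≤ rw₀ u := by
        rw [abs_le] at h8
        linarith [h8.1]
      have hmemu : rw₀ u ∈ vanishingValues f u := by
        refine ⟨rw₀, Tw, hTwu, fun z hz => hrwb z ⟨hsu.trans hz.1, hz.2⟩, ?_, hrwt, rfl⟩
        intro z hz
        exact (hrwd z ⟨hsu.trans hz.1, hz.2⟩).mono (fun w hw => ⟨hsu.trans hw.1, hw.2⟩)
      calc ψ u - ε ≤ rw₀ u := h9
        _ ≤ _ := le_csSup (vanishing_bdd hδ hR₀ hlarge u) hmemu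
  by_contra hcon
  push_neg at hcon
  set ε := min ((ψ u - sSup (vanishingValues f u))/2) (δ/2) with hεdef
  have hε1 : 0 < ε := lt_min (by linarith) (by linarith)
  have h1 := key ε hε1 (min_le_right _ _)
  have h2 : ε ≤ (ψ u - sSup (vanishingValues f u))/2 := min_le_left _ _
  linarith

include hf hlip hδ hc hsmall hR₀ hlarge hK hbdd in
lemma escaping_ge {t : ℝ} {r : ℝ → ℝ} (hr : r ∈ escapingSolutions f t) :
    sSup (vanishingValues f t) ≤ r t := by
  obtain ⟨hpos, hder, htop⟩ := hr
  have hgt : ∀ x ∈ Ici t, δ < r x := by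
    intro x₀ hx₀
    by_contra h
    push_neg at h
    have hbar : ∀ x', x₀ ≤ x' → r x' ≤ δ := by
      intro x' hx'
      have hsub : Icc x₀ x' ⊆ Ici t := fun z hz => le_trans hx₀ hz.1
      have hb := barrier_above (a := x₀) (b := x') (d := δ) (α := r)
        (D := fun z => f z (r z))
        (fun z hz => (hder z (hsub hz)).mono hsub)
        (fun z hz hz2 => by
          have h4 := fsmall' hf hδ hsmall z (r z)
            (hpos z (hsub (Ico_subset_Icc_self hz))) (le_of_eq hz2)
          have h5 : -c / (2 * r z) < 0 :=
            div_neg_of_neg_of_pos (by linarith) (by rw [hz2]; linarith)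
          linarith)
        h
      exact hb x' ⟨hx', le_rfl⟩
    have hev : ∀ᶠ x in atTop, δ + 1 ≤ r x := htop.eventually_ge_atTop (δ+1)
    obtain ⟨x', hx'1, hx'2⟩ := (hev.and (eventually_ge_atTop x₀)).exists
    linarith [hbar x' hx'2]
  apply csSup_le (vanishing_nonempty hf hlip hδ hc hsmall hK hbdd t)
  intro y hy
  by_contra hcon
  push_neg at hcon
  obtain ⟨ρ, T, hT, hρpos, hρd, hρt, hρ0⟩ := hy
  have hev : ∀ᶠ z in 𝓝[<] T, ρ z < δ := hρt.eventually_lt_const hδ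
  have hmem : Ioo (max t (T-1)) T ∈ 𝓝[<] T :=
    Ioo_mem_nhdsLT_of_mem ⟨max_lt hT (by linarith), le_rfl⟩
  obtain ⟨x₃, h31, h32⟩ := (hev.and (eventually_of_mem hmem (fun z hz => hz))).exists
  have htx₃ : t ≤ x₃ := (le_max_left t _).trans h32.1.le
  have hx₃T : x₃ < T := h32.2
  have hsubρ : Icc t x₃ ⊆ Ico t T := fun z hz => ⟨hz.1, lt_of_le_of_lt hz.2 hx₃T⟩
  have hsubr : Icc t x₃ ⊆ Ici t := fun z hz => hz.1
  have hcρ : ContinuousOn ρ (Icc t x₃) := fun z hz =>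
    ((hρd z (hsubρ hz)).mono hsubρ).continuousWithinAt
  have hcr : ContinuousOn r (Icc t x₃) := fun z hz =>
    ((hder z (hsubr hz)).mono hsubr).continuousWithinAt
  have hIVT : (0:ℝ) ∈ (fun z => ρ z - r z) '' Icc t x₃ := by
    apply intermediate_value_Icc' htx₃ (hcρ.sub hcr)
    constructor
    · have h5 := hgt x₃ htx₃
      show ρ x₃ - r x₃ ≤ 0
      linarith
    · have h6 : ρ t = y := hρ0
      show 0 ≤ ρ t - r t
      linarith
  obtain ⟨σ, hσI, hσeq⟩ := hIVT
  have hσeq' : ρ σ = r σ := by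
    have : ρ σ - r σ = 0 := hσeq
    linarith
  -- uniqueness on [σ, x₃]
  have hsub1 : Icc σ x₃ ⊆ Icc t x₃ := Icc_subset_Icc hσI.1 le_rfl
  have hcomp : IsCompact (Icc σ x₃) := isCompact_Icc
  have hne : (Icc σ x₃).Nonempty := ⟨σ, le_rfl, hσI.2⟩
  obtain ⟨z₁, hz₁, hz₁m⟩ := hcomp.exists_isMinOn hne (hcρ.mono hsub1)
  obtain ⟨z₂, hz₂, hz₂m⟩ := hcomp.exists_isMinOn hne (hcr.mono hsub1)
  obtain ⟨z₃, hz₃, hz₃m⟩ := hcomp.exists_isMaxOn hne (hcρ.mono hsub1)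
  obtain ⟨z₄, hz₄, hz₄m⟩ := hcomp.exists_isMaxOn hne (hcr.mono hsub1)
  set p := min (ρ z₁) (r z₂) with hpdef
  set q := max (ρ z₃) (r z₄) with hqdef
  have hp0 : 0 < p := lt_min (hρpos z₁ (hsubρ (hsub1 hz₁))) (hpos z₂ (hsubr (hsub1 hz₂)))
  have huq := funiq hlip (a := σ) (b := x₃) (p := p) (q := q) hp0
    (fun z hz => (hρd z (hsubρ (hsub1 hz))).mono (fun w hw => hsubρ (hsub1 hw)))
    (fun z hz => (hder z (hsubr (hsub1 hz))).mono (fun w hw => hsubr (hsub1 hw)))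
    (fun z hz => ⟨(min_le_left _ _).trans (hz₁m hz), (le_max_left _ _).trans' (hz₃m hz)⟩)
    (fun z hz => ⟨(min_le_right _ _).trans (hz₂m hz), (le_max_right _ _).trans' (hz₄m hz)⟩)
    hσeq' ⟨hσI.2, le_rfl⟩
  have h7 := hgt x₃ htx₃
  rw [huq] at h31
  linarith

end Main

/-- Second part of Theorem 4.2: there is a global positive bounded solution `R₊`
which at each time is the supremum of the values of all solutions ending at
`r = 0` in finite time, and which lies below every escaping solution. -/
theorem inner_black_hole_horizon_exists (f : ℝ → ℝ → ℝ)
    (hf : ContinuousOn (fun p : ℝ × ℝ => f p.1 p.2) (Set.univ ×ˢ Set.Ioi 0))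
    (hlip : ∀ a b : ℝ, 0 < a → a < b → ∃ L > 0, ∀ x : ℝ,
      ∀ r₁ ∈ Set.Icc a b, ∀ r₂ ∈ Set.Icc a b, |f x r₁ - f x r₂| ≤ L * |r₁ - r₂|)
    (δ c R₀ K : ℝ) (hδ : 0 < δ) (hc : 0 < c)
    (hsmall : ∀ x r : ℝ, 0 < r → r < δ → f x r ≤ -c / (2 * r))
    (hR₀ : δ < R₀) (hlarge : ∀ x r : ℝ, R₀ ≤ r → (1 : ℝ) / 2 ≤ f x r)
    (hK : 0 < K) (hbdd : ∀ x r : ℝ, δ ≤ r → |f x r| ≤ K) :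
    ∃ m M : ℝ, 0 < m ∧ m ≤ M ∧
      ∃ R : ℝ → ℝ,
        (∀ x, m ≤ R x ∧ R x ≤ M) ∧
        (∀ x, HasDerivAt R (f x (R x)) x) ∧
        (∀ t : ℝ, R t = sSup (vanishingValues f t)) ∧
        (∀ t : ℝ, ∀ r ∈ escapingSolutions f t, R t ≤ r t) := by
  obtain ⟨L, hL, hLf⟩ := gfun_lip hlip hδ hR₀
  obtain ⟨C, hC, hCf⟩ := gfun_bdd hlip hδ hR₀ hK hbdd
  refine ⟨δ, R₀, hδ, hR₀.le, fun t => sSup (vanishingValues f t), ?_, ?_, fun t => rfl, ?_⟩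
  · exact fun x => ⟨Rlb hf hlip hδ hc hsmall hR₀ hlarge hK hbdd x,
      Rub hf hlip hδ hc hsmall hR₀ hlarge hK hbdd x⟩
  · intro t₀
    obtain ⟨ρ, hρ0, hρd⟩ := gexists hf hlip hδ hR₀ hK hbdd hC hCf hL hLf
      (t₀-1) (t₀+1) (t₀-1) (sSup (vanishingValues f (t₀-1))) ⟨le_rfl, by linarith⟩
    have hEq : ∀ u ∈ Set.Icc (t₀-1) (t₀+1), ρ u = sSup (vanishingValues f u) := by
      intro u hu
      have hres : ∀ x ∈ Set.Icc (t₀-1) u,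
          HasDerivWithinAt ρ (gfun f δ R₀ x (ρ x)) (Set.Icc (t₀-1) u) x :=
        fun x hx => (hρd x ⟨hx.1, hx.2.trans hu.2⟩).mono (Set.Icc_subset_Icc le_rfl hu.2)
      have h1 := star_le hf hlip hδ hc hsmall hR₀ hlarge hK hbdd hL hLf hC hCf hu.1 hres hρ0
      have h2 := (star_ge hf hlip hδ hc hsmall hR₀ hlarge hK hbdd hL hLf hC hCf hu.1 hres hρ0).2
      linarith
    have hρt₀ : ρ t₀ = sSup (vanishingValues f t₀) := hEq t₀ ⟨by linarith, by linarith⟩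
    have hDA : HasDerivAt ρ (gfun f δ R₀ t₀ (ρ t₀)) t₀ :=
      (hρd t₀ ⟨by linarith, by linarith⟩).hasDerivAt (Icc_mem_nhds (by linarith) (by linarith))
    have hEv : (fun u => sSup (vanishingValues f u)) =ᶠ[nhds t₀] ρ := by
      filter_upwards [Icc_mem_nhds (show t₀-1 < t₀ by linarith) (show t₀ < t₀+1 by linarith)]
        with u hu
      exact (hEq u hu).symm
    have hDA2 := hDA.congr_of_eventuallyEq hEv
    have hval : gfun f δ R₀ t₀ (ρ t₀) = f t₀ (sSup (vanishingValues f t₀)) := by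
      rw [hρt₀, gfun_eq hδ hR₀
        (by linarith [Rlb hf hlip hδ hc hsmall hR₀ hlarge hK hbdd t₀])
        (by linarith [Rub hf hlip hδ hc hsmall hR₀ hlarge hK hbdd t₀])]
    rw [hval] at hDA2
    exact hDA2
  · intro t r hr
    exact escaping_ge hf hlip hδ hc hsmall hR₀ hlarge hK hbdd hr
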